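/- Let $N = S^1 \times \Sigma$ for a closed oriented surface $\Sigma$, let $c = [S^1 \times *] \in H_1(N;\mathbb{Z})$, let $e \in H^2(N;\mathbb{Z})$, and let $p_*\colon H^2(X_e;\mathbb{Q}) \to H^1(N;\mathbb{Q})$ be integration along the fiber of the $S^1$-bundle $X_e \to N$ with Euler class $e$. Then $p_*(H^2(X_e;\mathbb{Q})) \subseteq \{\phi \in H^1(N;\mathbb{Q}) : \phi(c) = 0\}$ if and only if $e$ is a non-zero multiple of the Poincaré dual of $c$. -/

import Mathlib

lemma ker_le_ker_functional {V : Type*} [AddCommGroup V] [Module ℚ V]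
    (f g : V →ₗ[ℚ] ℚ) (hf : f ≠ 0) (h : LinearMap.ker f ≤ LinearMap.ker g) :
    ∃ l : ℚ, g = l • f := by
  obtain ⟨x, hx⟩ : ∃ x, f x ≠ 0 := by
    by_contra hc
    push_neg at hc
    exact hf (LinearMap.ext fun v => hc v)
  refine ⟨g x / f x, LinearMap.ext fun v => ?_⟩
  have hv : f (v - (f v / f x) • x) = 0 := by
    simp only [map_sub, map_smul, smul_eq_mul]
    field_simp
    ring
  have hgv : g (v - (f v / f x) • x) = 0 := h hv
  simp only [map_sub, map_smul, smul_eq_mul, sub_eq_zero] at hgv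
  simp only [LinearMap.smul_apply, smul_eq_mul]
  rw [hgv]; field_simp

/-- let `N = S¹ × Σ`, `c = [S¹ × *] ∈ H₁(N;ℤ)`, and `X_e → N` the `S¹`-bundle
with Euler class `e`.  We model `H¹(N;ℚ)` and `H²(N;ℚ)` abstractly; the cup product pairing
`H²(N;ℚ) × H¹(N;ℚ) → H³(N;ℚ) ≅ ℚ` is nondegenerate (Poincaré duality), `evc` is evaluation
on `c` (a nonzero functional), and `PDc` is the Poincaré dual of `c`, characterized by
`cup PDc = evc`.  By the Gysin sequence `p₊(H²(X_e;ℚ)) = ker(∪ e)`.  Then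
`p₊(H²(X_e;ℚ)) ⊆ {φ | φ(c) = 0}` if and only if `e` is a non-zero multiple of `PDc`. -/
theorem stmt5 {H1N H2N : Type*}
    [AddCommGroup H1N] [Module ℚ H1N] [FiniteDimensional ℚ H1N]
    [AddCommGroup H2N] [Module ℚ H2N] [FiniteDimensional ℚ H2N]
    (cup : H2N →ₗ[ℚ] (H1N →ₗ[ℚ] ℚ))
    (hnondeg : ∀ x : H2N, cup x = 0 → x = 0)
    (evc : H1N →ₗ[ℚ] ℚ) (hevc : evc ≠ 0)
    (PDc : H2N) (hPD : cup PDc = evc)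
    (e : H2N)
    (image : Submodule ℚ H1N) (hGysin : image = LinearMap.ker (cup e)) :
    ((image : Set H1N) ⊆ {φ : H1N | evc φ = 0}) ↔ ∃ l : ℚ, l ≠ 0 ∧ e = l • PDc := by
  subst hGysin
  constructor
  · intro h
    have hsub : LinearMap.ker (cup e) ≤ LinearMap.ker evc := fun v hv => h hv
    have hce : cup e ≠ 0 := by
      intro h0
      have he0 : e = 0 := hnondeg e h0
      apply hevc
      ext v
      have : v ∈ LinearMap.ker (cup e) := by simp [he0]
      simpa using hsub this
    obtain ⟨l, hl⟩ := ker_le_ker_functional (cup e) evc hce hsub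
    have hl0 : l ≠ 0 := by
      rintro rfl
      simp at hl
      exact hevc hl
    refine ⟨l⁻¹, inv_ne_zero hl0, ?_⟩
    have : cup (l • e) = cup PDc := by
      rw [map_smul, hPD, hl]
    have hle : l • e = PDc := by
      have := sub_eq_zero.mpr this
      rw [← map_sub] at this
      have := hnondeg _ this
      exact sub_eq_zero.mp this
    rw [← hle, smul_smul, inv_mul_cancel₀ hl0, one_smul]
  · rintro ⟨l, hl0, rfl⟩
    intro v hv
    simp only [SetLike.mem_coe, LinearMap.mem_ker, map_smul] at hv
    have h2 : l * evc v = 0 := by simpa [hPD] using hv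
    have := mul_eq_zero.mp h2
    tauto
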